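/- Let (T, n) be a 0-dimensional local affine K-algebra over a perfect field K whose maximal ideal n is principal, say n = ⟨a⟩, with nilpotency index ν = min{i ≥ 1 : a^i = 0}, residue field L = T/n, and κ = dim_K L. Then dim_K(T) = ν·κ, and dim_K(Ω^1_{T/K}) = ν·κ if char(K) divides ν, while dim_K(Ω^1_{T/K}) = (ν−1)·κ if char(K) does not divide ν. -/

import Mathlib

open Module IsLocalRing

open Polynomial in
/-- Kernel lemma: if `aeval a f ∈ (a^k)` with `k ≤ ν`, then `X^k ∣ f`. -/
lemma aux_ker {L T : Type} [Field L] [CommRing T] [Algebra L T] [Nontrivial T]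
    (a : T) (ν : ℕ) (hνzero : a ^ ν = 0)
    (hνmin : ∀ i, 1 ≤ i → a ^ i = 0 → ν ≤ i)
    (k : ℕ) (hk : k ≤ ν) (f : L[X])
    (hf : Polynomial.aeval a f ∈ Ideal.span {a ^ k}) :
    f ∈ Ideal.span {(X : L[X]) ^ k} := by
  have hmonic : ((X : L[X]) ^ k).Monic := monic_X_pow k
  set r := f %ₘ ((X : L[X]) ^ k) with hrdef
  have hfr : f = X ^ k * (f /ₘ X ^ k) + r := by
    rw [hrdef, modByMonic_eq_sub_mul_div f ((X : L[X]) ^ k)]; ring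
  have hr : Polynomial.aeval a r ∈ Ideal.span {a ^ k} := by
    have : Polynomial.aeval a r =
        Polynomial.aeval a f - a ^ k * Polynomial.aeval a (f /ₘ X ^ k) := by
      conv_lhs => rw [hrdef, modByMonic_eq_sub_mul_div f ((X : L[X]) ^ k)]
      simp
    rw [this]
    exact sub_mem hf (Ideal.mul_mem_right _ _ (Ideal.mem_span_singleton_self _))
  by_cases hr0 : r = 0
  · rw [Ideal.mem_span_singleton]
    rw [← modByMonic_eq_zero_iff_dvd hmonic]
    exact hr0
  · exfalso
    set j := r.natTrailingDegree with hjdef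
    have hXj : (X : L[X]) ^ j ∣ r := by
      rw [Polynomial.X_pow_dvd_iff]
      intro d hd
      exact Polynomial.coeff_eq_zero_of_lt_natTrailingDegree hd
    obtain ⟨g, hg⟩ := hXj
    have hg0 : g.coeff 0 ≠ 0 := by
      intro h0
      obtain ⟨g', hg'⟩ := Polynomial.X_dvd_iff.mpr h0
      have : (X : L[X]) ^ (j + 1) ∣ r := ⟨g', by rw [hg, hg', pow_succ]; ring⟩
      rw [Polynomial.X_pow_dvd_iff] at this
      have h1 := this j (Nat.lt_succ_self j)
      exact Polynomial.trailingCoeff_nonzero_iff_nonzero.mpr hr0 h1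
    -- `aeval a g` is a unit
    have hnila : IsNilpotent a := ⟨ν, hνzero⟩
    have hgunit : IsUnit (Polynomial.aeval a g) := by
      obtain ⟨g', hg'⟩ : (X : L[X]) ∣ (g - Polynomial.C (g.coeff 0)) := by
        rw [Polynomial.X_dvd_iff]; simp
      have hgeq : g = Polynomial.C (g.coeff 0) + X * g' := by
        rw [← hg']; ring
      rw [hgeq, map_add]
      have hu : IsUnit (Polynomial.aeval a (Polynomial.C (g.coeff 0))) := by
        rw [Polynomial.aeval_C]
        exact (isUnit_iff_ne_zero.mpr hg0).map (algebraMap L T)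
      have hn : IsNilpotent (Polynomial.aeval a (X * g')) := by
        rw [map_mul, Polynomial.aeval_X]
        exact ⟨ν, by rw [mul_pow, hνzero, zero_mul]⟩
      exact hn.isUnit_add_left_of_commute hu (Commute.all _ _)
    -- degrees
    have hjk : j < k := by
      have h1 : r.degree < ((X : L[X]) ^ k).degree := degree_modByMonic_lt f hmonic
      rw [Polynomial.degree_X_pow] at h1
      have h2 : r.natDegree < k := by
        rwa [Polynomial.natDegree_lt_iff_degree_lt hr0]
      exact lt_of_le_of_lt r.natTrailingDegree_le_natDegree h2
    -- derive `a ^ j = 0`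
    obtain ⟨c, hc⟩ := Ideal.mem_span_singleton'.mp hr
    have hav : Polynomial.aeval a r = a ^ j * Polynomial.aeval a g := by
      rw [hg, map_mul, map_pow, Polynomial.aeval_X]
    obtain ⟨u, hu⟩ := hgunit
    have key : a ^ j * (1 - c * ↑u⁻¹ * a ^ (k - j)) = 0 := by
      have h1 : a ^ j * (Polynomial.aeval a g) = c * a ^ k := by rw [← hav, hc]
      have h2 : a ^ k = a ^ j * a ^ (k - j) := by
        rw [← pow_add, Nat.add_sub_cancel' (le_of_lt hjk)]
      have h3 : a ^ j * ↑u = c * (a ^ j * a ^ (k - j)) := by rw [hu, h1, h2]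
      have h4 : a ^ j * ↑u * ↑u⁻¹ = c * (a ^ j * a ^ (k - j)) * ↑u⁻¹ := by rw [h3]
      rw [mul_assoc, Units.mul_inv, mul_one] at h4
      linear_combination h4
    have hunit : IsUnit (1 - c * ↑u⁻¹ * a ^ (k - j)) := by
      have hn : IsNilpotent (c * ↑u⁻¹ * a ^ (k - j)) := by
        refine ⟨ν, ?_⟩
        rw [mul_pow, mul_pow, ← pow_mul]
        have : k - j ≥ 1 := Nat.one_le_iff_ne_zero.mpr (Nat.sub_ne_zero_of_lt hjk)
        have : a ^ ((k - j) * ν) = 0 := by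
          have hle : ν ≤ (k - j) * ν := Nat.le_mul_of_pos_left ν this
          obtain ⟨m, hm⟩ := Nat.exists_eq_add_of_le hle
          rw [hm, pow_add, hνzero, zero_mul]
        rw [this, mul_zero]
      exact (IsNilpotent.isUnit_one_sub hn)
    have haj : a ^ j = 0 := by
      obtain ⟨v, hv⟩ := hunit
      calc a ^ j = a ^ j * (1 - c * ↑u⁻¹ * a ^ (k - j)) * ↑v⁻¹ := by
            rw [← hv]; rw [mul_assoc, Units.mul_inv, mul_one]
        _ = 0 := by rw [key, zero_mul]
    rcases Nat.eq_zero_or_pos j with hj0 | hj1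
    · rw [hj0, pow_zero] at haj
      exact one_ne_zero haj
    · exact absurd haj (by
        intro h
        have := hνmin j hj1 h
        omega)

open Polynomial in
lemma aux_surj {L T : Type} [Field L] [CommRing T] [IsLocalRing T]
    [Algebra L T]
    (a : T) (ha : maximalIdeal T = Ideal.span {a}) (ν : ℕ) (hνzero : a ^ ν = 0)
    (hfull : ∀ t : T, ∃ l : L, t - algebraMap L T l ∈ maximalIdeal T) :
    Function.Surjective (Polynomial.aeval a : L[X] →ₐ[L] T) := by
  have key : ∀ k : ℕ, ∀ x : T, x ∈ Ideal.span {a ^ (ν - k)} →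
      ∃ f : L[X], Polynomial.aeval a f = x := by
    intro k
    induction k with
    | zero =>
      intro x hx
      obtain ⟨c, hc⟩ := Ideal.mem_span_singleton'.mp hx
      refine ⟨0, ?_⟩
      rw [map_zero, ← hc]
      simp [hνzero]
    | succ k ih =>
      intro x hx
      obtain ⟨c, hc⟩ := Ideal.mem_span_singleton'.mp hx
      obtain ⟨l, hl⟩ := hfull c
      rw [ha, Ideal.mem_span_singleton'] at hl
      obtain ⟨s, hs⟩ := hl
      set m := ν - (k + 1) with hm
      have hxeq : x = algebraMap L T l * a ^ m + s * a ^ (m + 1) := by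
        rw [← hc]
        have : c = algebraMap L T l + s * a := by linear_combination -hs
        rw [this]; ring
      have hmem : s * a ^ (m + 1) ∈ Ideal.span {a ^ (ν - k)} := by
        have hle : ν - k ≤ m + 1 := by omega
        obtain ⟨d, hd⟩ := Nat.exists_eq_add_of_le hle
        rw [Ideal.mem_span_singleton', hd, pow_add]
        exact ⟨s * a ^ d, by ring⟩
      obtain ⟨g, hg⟩ := ih _ hmem
      refine ⟨Polynomial.C l * X ^ m + g, ?_⟩
      rw [map_add, map_mul, map_pow, Polynomial.aeval_X, Polynomial.aeval_C, hg, hxeq]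
  intro x
  apply key ν
  rw [Nat.sub_self, pow_zero, Ideal.mem_span_singleton']
  exact ⟨x, mul_one x⟩

open Polynomial in
lemma aux_derzero {K L T M : Type} [Field K] [Field L] [CommRing T]
    [Algebra K T] [Algebra L T] [AddCommGroup M] [Module K M] [Module T M]
    [IsScalarTower K T M]
    (a : T) (hsurj : Function.Surjective (Polynomial.aeval a : L[X] →ₐ[L] T))
    (D : Derivation K T M) (hDa : D a = 0) (hDl : ∀ l : L, D (algebraMap L T l) = 0)
    (t : T) : D t = 0 := by
  obtain ⟨f, rfl⟩ := hsurj t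
  induction f using Polynomial.induction_on' with
  | add p q hp hq => rw [map_add, map_add, hp, hq, add_zero]
  | monomial n c =>
    rw [Polynomial.aeval_monomial, Derivation.leibniz]
    rw [Derivation.leibniz_pow, hDa, hDl]
    simp

open Polynomial in
theorem aux_main (K L T : Type) [Field K] [Field L] [CommRing T] [IsLocalRing T]
    [Algebra K T] [Algebra L T] [Algebra K L] [IsScalarTower K L T]
    [Algebra.FormallyUnramified K L]
    (a : T) (ha : maximalIdeal T = Ideal.span {a})
    (ν : ℕ) (hν1 : 1 ≤ ν) (hνzero : a ^ ν = 0) (hνmin : ∀ i, 1 ≤ i → a ^ i = 0 → ν ≤ i)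
    (hfull : ∀ t : T, ∃ l : L, t - algebraMap L T l ∈ maximalIdeal T) :
    finrank K T = ν * finrank K L ∧
    ((ringChar K ∣ ν) → finrank K (Ω[T⁄K]) = ν * finrank K L) ∧
    (¬ (ringChar K ∣ ν) → finrank K (Ω[T⁄K]) = (ν - 1) * finrank K L) := by
  classical
  have hsurj : Function.Surjective (Polynomial.aeval a : L[X] →ₐ[L] T) :=
    aux_surj a ha ν hνzero hfull
  have hker : ∀ k : ℕ, k ≤ ν → ∀ f : L[X],
      Polynomial.aeval a f ∈ Ideal.span {a ^ k} ↔ f ∈ Ideal.span {(X : L[X]) ^ k} := by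
    intro k hk f
    constructor
    · exact aux_ker a ν hνzero hνmin k hk f
    · intro hf
      obtain ⟨g, rfl⟩ := Ideal.mem_span_singleton.mp hf
      rw [map_mul, map_pow, Polynomial.aeval_X]
      exact Ideal.mul_mem_right _ _ (Ideal.mem_span_singleton_self _)
  have hdim : ∀ k : ℕ, k ≤ ν →
      finrank K (T ⧸ Ideal.span {a ^ k}) = k * finrank K L := by
    intro k hk
    have hρ : Function.Surjective
        ((Ideal.Quotient.mkₐ L (Ideal.span {a ^ k})).comp
          (Polynomial.aeval a : L[X] →ₐ[L] T)) :=
      (Ideal.Quotient.mkₐ_surjective L (I := Ideal.span {a ^ k})).comp hsurj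
    have hkerρ : RingHom.ker ((Ideal.Quotient.mkₐ L (Ideal.span {a ^ k})).comp
          (Polynomial.aeval a : L[X] →ₐ[L] T)) =
        Ideal.span {(X : L[X]) ^ k} := by
      ext f
      rw [RingHom.mem_ker]
      show Ideal.Quotient.mk _ (Polynomial.aeval a f) = 0 ↔ _
      rw [Ideal.Quotient.eq_zero_iff_mem]
      exact hker k hk f
    have e1 := Ideal.quotientKerAlgEquivOfSurjective hρ
    have e2 := Ideal.quotientEquivAlgOfEq L hkerρ
    have e3 : finrank L (T ⧸ Ideal.span {a ^ k}) =
        finrank L (L[X] ⧸ Ideal.span {(X : L[X]) ^ k}) :=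
      (e1.symm.trans e2).toLinearEquiv.finrank_eq
    have hfr : finrank L (L[X] ⧸ Ideal.span {(X : L[X]) ^ k}) = k := by
      have hpb := (AdjoinRoot.powerBasis' (monic_X_pow (n := k) (R := L))).finrank
      rw [AdjoinRoot.powerBasis'_dim, natDegree_X_pow] at hpb
      exact hpb
    have htower := Module.finrank_mul_finrank K L (T ⧸ Ideal.span {a ^ k})
    rw [e3, hfr] at htower
    rw [← htower, mul_comm]
  have hbot : (Ideal.span {a ^ ν} : Ideal T) = ⊥ := by
    rw [hνzero]; simpa using Ideal.span_singleton_eq_bot.mpr rfl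
  have part1 : finrank K T = ν * finrank K L := by
    have e : (T ⧸ Ideal.span {a ^ ν}) ≃ₗ[K] T :=
      (Submodule.quotEquivOfEqBot _ hbot).restrictScalars K
    rw [← e.finrank_eq, hdim ν le_rfl]
  -- the presentation equivalence
  haveI : Nontrivial T := inferInstance
  have ker0 : ∀ f : L[X], Polynomial.aeval a f = 0 ↔ f ∈ Ideal.span {(X : L[X]) ^ ν} := by
    intro f
    constructor
    · intro h
      exact aux_ker a ν hνzero hνmin ν le_rfl f (by rw [h]; exact Submodule.zero_mem _)
    · intro hf
      obtain ⟨g, rfl⟩ := Ideal.mem_span_singleton.mp hf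
      rw [map_mul, map_pow, Polynomial.aeval_X, hνzero, zero_mul]
  have hliftker : ∀ f ∈ Ideal.span {(X : L[X]) ^ ν},
      Polynomial.aeval a f = (0 : T) := fun f hf => (ker0 f).mpr hf
  let φq : (L[X] ⧸ Ideal.span {(X : L[X]) ^ ν}) →ₐ[L] T :=
    Ideal.Quotient.liftₐ (Ideal.span {(X : L[X]) ^ ν}) (Polynomial.aeval a) hliftker
  have hφq : ∀ g : L[X], φq (Ideal.Quotient.mk _ g) = Polynomial.aeval a g := fun g =>
    Ideal.Quotient.liftₐ_apply _ _ _ _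
  have hφqbij : Function.Bijective φq := by
    constructor
    · rw [injective_iff_map_eq_zero]
      intro x hx
      obtain ⟨g, rfl⟩ := Ideal.Quotient.mk_surjective x
      rw [hφq] at hx
      rw [Ideal.Quotient.eq_zero_iff_mem]
      exact (ker0 g).mp hx
    · intro t
      obtain ⟨g, hg⟩ := hsurj t
      exact ⟨Ideal.Quotient.mk _ g, by rw [hφq, hg]⟩
  let e : (L[X] ⧸ Ideal.span {(X : L[X]) ^ ν}) ≃ₐ[L] T := AlgEquiv.ofBijective φq hφqbij
  have he : ∀ g : L[X], e (Ideal.Quotient.mk _ g) = Polynomial.aeval a g := hφq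
  -- canonical representatives
  let repl : T →ₗ[L] L[X] :=
    (AdjoinRoot.modByMonicHom (monic_X_pow (n := ν) (R := L))).comp
      e.symm.toLinearEquiv.toLinearMap
  have hrep : ∀ t : T, Polynomial.aeval a (repl t) = t := by
    intro t
    obtain ⟨g, hg⟩ := Ideal.Quotient.mk_surjective (e.symm t)
    have h1 : repl t = g %ₘ (X : L[X]) ^ ν := by
      show AdjoinRoot.modByMonicHom (monic_X_pow (n := ν) (R := L)) (e.symm t) = _
      rw [← hg]
      exact AdjoinRoot.modByMonicHom_mk (monic_X_pow (n := ν) (R := L)) g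
    have h2 : Polynomial.aeval a (g %ₘ (X : L[X]) ^ ν) = Polynomial.aeval a g := by
      rw [modByMonic_eq_sub_mul_div g ((X : L[X]) ^ ν)]
      rw [map_sub, map_mul, map_pow, Polynomial.aeval_X, hνzero, zero_mul, sub_zero]
    rw [h1, h2, ← he g, hg]
    exact e.apply_symm_apply t
  -- Kaehler differential generated by da
  let Dt := KaehlerDifferential.D K T
  let da := Dt a
  let q : T →ₗ[T] Ω[T⁄K] := LinearMap.toSpanSingleton T _ da
  have hq : ∀ t, q t = t • da := fun t => rfl
  haveI : SMulCommClass K L T := ⟨fun k l t => by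
    rw [Algebra.smul_def, Algebra.smul_def, Algebra.smul_def, Algebra.smul_def, mul_left_comm]⟩
  have hDalg : ∀ l : L, Dt (algebraMap L T l) = 0 := by
    intro l
    haveI : Subsingleton (Ω[L⁄K]) :=
      Algebra.FormallyUnramified.subsingleton_kaehlerDifferential (R := K) (A := L)
    show Dt (algebraMap L T l) = 0
    rw [← KaehlerDifferential.map_D K K L T]
    rw [Subsingleton.elim (KaehlerDifferential.D K L l) 0, map_zero]
  have hqsurj : Function.Surjective q := by
    have hle : Submodule.span T (Set.range ⇑Dt) ≤ LinearMap.range q := by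
      rw [Submodule.span_le]
      rintro _ ⟨t, rfl⟩
      have hda : da ∈ LinearMap.range q := ⟨1, one_smul _ _⟩
      let Dbar : Derivation K T (Ω[T⁄K] ⧸ LinearMap.range q) :=
        (LinearMap.range q).mkQ.compDer Dt
      have hb1 : Dbar a = 0 := by
        show (LinearMap.range q).mkQ da = 0
        rw [Submodule.mkQ_apply, Submodule.Quotient.mk_eq_zero]
        exact hda
      have hb2 : ∀ l : L, Dbar (algebraMap L T l) = 0 := by
        intro l
        show (LinearMap.range q).mkQ (Dt (algebraMap L T l)) = 0
        rw [hDalg l, map_zero]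
      have h0 : (LinearMap.range q).mkQ (Dt t) = 0 := aux_derzero a hsurj Dbar hb1 hb2 t
      rwa [Submodule.mkQ_apply, Submodule.Quotient.mk_eq_zero] at h0
    rw [← LinearMap.range_eq_top, eq_top_iff, ← KaehlerDifferential.span_range_derivation]
    exact hle
  -- derivations into quotients
  have hD' : ∀ (J : Ideal T), (∀ z : T, (ν : T) * a ^ (ν - 1) * z ∈ J) →
      ∃ D' : Derivation K T (T ⧸ J), D' a = Ideal.Quotient.mk J 1 := by
    intro J hJν
    let πJ : L[X] →ₐ[L] T ⧸ J :=
      (Ideal.Quotient.mkₐ L J).comp (Polynomial.aeval a : L[X] →ₐ[L] T)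
    have hπJ : ∀ p : L[X], πJ p = Ideal.Quotient.mk J (Polynomial.aeval a p) := fun p => rfl
    have hkill : ∀ h : L[X], πJ (derivative ((X : L[X]) ^ ν * h)) = 0 := by
      intro h
      rw [derivative_mul, derivative_X_pow, map_add, hπJ, hπJ]
      have h1 : Polynomial.aeval a (Polynomial.C ((ν : L)) * X ^ (ν - 1) * h)
          = (ν : T) * a ^ (ν - 1) * Polynomial.aeval a h := by
        rw [map_mul, map_mul, Polynomial.aeval_C, map_pow, Polynomial.aeval_X, map_natCast]
      have h2 : Polynomial.aeval a ((X : L[X]) ^ ν * derivative h) = 0 := by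
        rw [map_mul, map_pow, Polynomial.aeval_X, hνzero, zero_mul]
      rw [h1, h2, map_zero, add_zero, Ideal.Quotient.eq_zero_iff_mem]
      exact hJν _
    have hcongr : ∀ p r : L[X], Polynomial.aeval a p = Polynomial.aeval a r →
        πJ (derivative p) = πJ (derivative r) := by
      intro p r hpr
      obtain ⟨h, hh⟩ := Ideal.mem_span_singleton.mp
        ((ker0 (p - r)).mp (by rw [map_sub, hpr, sub_self]))
      have hpe : p = r + (X : L[X]) ^ ν * h := by linear_combination hh
      rw [hpe, derivative_add, map_add, hkill, add_zero]
    let D'lin : T →ₗ[K] T ⧸ J :=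
      ((πJ.toLinearMap.comp (Polynomial.derivative (R := L))).comp repl).restrictScalars K
    have hD'lin : ∀ t : T, D'lin t = πJ (derivative (repl t)) := fun t => rfl
    have hsmul : ∀ (x : T) (p : L[X]), πJ (repl x * p) = x • πJ p := by
      intro x p
      calc πJ (repl x * p) = Ideal.Quotient.mk J (x * Polynomial.aeval a p) := by
            rw [hπJ, map_mul, hrep]
        _ = x • Ideal.Quotient.mk J (Polynomial.aeval a p) := by
            rw [← Ideal.Quotient.mk_eq_mk, ← Ideal.Quotient.mk_eq_mk,
              ← Submodule.Quotient.mk_smul, smul_eq_mul]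
        _ = x • πJ p := by rw [hπJ]
    refine ⟨{ toLinearMap := D'lin, map_one_eq_zero' := ?_, leibniz' := ?_ }, ?_⟩
    · show D'lin 1 = 0
      rw [hD'lin, hcongr (repl 1) 1 (by rw [hrep, map_one]), derivative_one, map_zero]
    · intro x y
      show D'lin (x * y) = x • D'lin y + y • D'lin x
      rw [hD'lin, hD'lin, hD'lin]
      rw [hcongr (repl (x * y)) (repl x * repl y) (by rw [hrep, map_mul, hrep, hrep])]
      rw [derivative_mul, map_add, hsmul x (derivative (repl y))]
      rw [mul_comm (derivative (repl x)) (repl y), hsmul y (derivative (repl x))]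
      ring
    · show D'lin a = Ideal.Quotient.mk J 1
      rw [hD'lin, hcongr (repl a) X (by rw [hrep, Polynomial.aeval_X]), derivative_X, hπJ, map_one]
  have hsmul1 : ∀ (t : T) (J : Ideal T),
      t • Ideal.Quotient.mk J (1 : T) = Ideal.Quotient.mk J t := by
    intro t J
    rw [← Ideal.Quotient.mk_eq_mk, ← Ideal.Quotient.mk_eq_mk,
      ← Submodule.Quotient.mk_smul, smul_eq_mul, mul_one]
  refine ⟨part1, ?_, ?_⟩
  · -- char K ∣ ν
    intro hchar
    have hνK : (ν : K) = 0 := (ringChar.spec K ν).mpr hchar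
    have hνT : (ν : T) = 0 := by
      rw [← map_natCast (algebraMap K T) ν, hνK, map_zero]
    obtain ⟨D', hD'a⟩ := hD' (Ideal.span {a ^ ν}) (fun z => by
      rw [hνT, zero_mul, zero_mul]; exact Submodule.zero_mem _)
    have hkerq : LinearMap.ker q = ⊥ := by
      rw [eq_bot_iff]
      intro t ht
      rw [LinearMap.mem_ker] at ht
      have hF := congrArg D'.liftKaehlerDifferential ht
      rw [map_zero] at hF
      rw [hq, map_smul, Derivation.liftKaehlerDifferential_comp_D, hD'a, hsmul1] at hF
      have := Ideal.Quotient.eq_zero_iff_mem.mp hF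
      rw [hbot] at this
      exact this
    have eq1 : T ≃ₗ[T] Ω[T⁄K] :=
      LinearEquiv.ofBijective q ⟨LinearMap.ker_eq_bot.mp hkerq, hqsurj⟩
    have := (eq1.restrictScalars K).finrank_eq
    rw [← this, part1]
  · -- ¬ char K ∣ ν
    intro hchar
    have hνK : (ν : K) ≠ 0 := fun h => hchar ((ringChar.spec K ν).mp h)
    have hJν : ∀ z : T, (ν : T) * a ^ (ν - 1) * z ∈ Ideal.span {a ^ (ν - 1)} := by
      intro z
      rw [Ideal.mem_span_singleton']
      exact ⟨(ν : T) * z, by ring⟩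
    obtain ⟨D', hD'a⟩ := hD' (Ideal.span {a ^ (ν - 1)}) hJν
    have hann : a ^ (ν - 1) • da = 0 := by
      have h1 : Dt (a ^ ν) = 0 := by rw [hνzero, map_zero]
      rw [Derivation.leibniz_pow] at h1
      have h2 : (ν : K) • (a ^ (ν - 1) • da) = 0 := by
        rw [Nat.cast_smul_eq_nsmul]; exact h1
      calc a ^ (ν - 1) • da = (ν : K)⁻¹ • ((ν : K) • (a ^ (ν - 1) • da)) := by
            rw [smul_smul, inv_mul_cancel₀ hνK, one_smul]
        _ = 0 := by rw [h2, smul_zero]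
    have hkerq : LinearMap.ker q = Ideal.span {a ^ (ν - 1)} := by
      ext t
      rw [LinearMap.mem_ker]
      constructor
      · intro ht
        have hF := congrArg D'.liftKaehlerDifferential ht
        rw [map_zero] at hF
        rw [hq, map_smul, Derivation.liftKaehlerDifferential_comp_D, hD'a, hsmul1] at hF
        exact Ideal.Quotient.eq_zero_iff_mem.mp hF
      · intro ht
        obtain ⟨c, hc⟩ := Ideal.mem_span_singleton'.mp ht
        rw [hq, ← hc, mul_smul, hann, smul_zero]
    have eq1 : (T ⧸ Ideal.span {a ^ (ν - 1)}) ≃ₗ[T] Ω[T⁄K] :=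
      (Submodule.quotEquivOfEq _ _ hkerq.symm).trans
        (q.quotKerEquivOfSurjective hqsurj)
    have := (eq1.restrictScalars K).finrank_eq
    rw [← this, hdim (ν - 1) (Nat.sub_le ν 1)]

/-- Let `(T, n)` be a 0-dimensional local affine algebra over a perfect field `K` whose
maximal ideal is principal, `n = ⟨a⟩`, with nilpotency index `ν = min {i ≥ 1 : a^i = 0}`,
residue field `L = T/n` and `κ = dim_K L`.  Then `dim_K T = ν κ`, and
`dim_K Ω¹_{T/K} = ν κ` if `char K ∣ ν`, while `dim_K Ω¹_{T/K} = (ν-1) κ` otherwise. -/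
theorem statement_18 (K T : Type) [Field K] [PerfectField K] [CommRing T] [IsLocalRing T]
    [Algebra K T] [FiniteDimensional K T]
    (a : T) (ha : maximalIdeal T = Ideal.span {a})
    (ν : ℕ) (hν1 : 1 ≤ ν) (hνzero : a ^ ν = 0) (hνmin : ∀ i, 1 ≤ i → a ^ i = 0 → ν ≤ i) :
    finrank K T = ν * finrank K (T ⧸ maximalIdeal T) ∧
    ((ringChar K ∣ ν) →
      finrank K (Ω[T⁄K]) = ν * finrank K (T ⧸ maximalIdeal T)) ∧
    (¬ (ringChar K ∣ ν) →
      finrank K (Ω[T⁄K]) = (ν - 1) * finrank K (T ⧸ maximalIdeal T)) := by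
  classical
  have hnil : IsNilpotent (maximalIdeal T) := by
    refine ⟨ν, ?_⟩
    rw [ha, Ideal.span_singleton_pow, hνzero]
    simpa using Ideal.span_singleton_eq_bot.mpr rfl
  letI : Field (T ⧸ maximalIdeal T) := Ideal.Quotient.field _
  haveI : FiniteDimensional K (T ⧸ maximalIdeal T) :=
    Module.Finite.of_surjective
      ((Submodule.mkQ (maximalIdeal T)).restrictScalars K)
      (Submodule.Quotient.mk_surjective _)
  haveI : Algebra.IsAlgebraic K (T ⧸ maximalIdeal T) := Algebra.IsAlgebraic.of_finite K _
  haveI : Algebra.IsSeparable K (T ⧸ maximalIdeal T) := inferInstance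
  haveI : Algebra.FormallyEtale K (T ⧸ maximalIdeal T) :=
    Algebra.FormallyEtale.of_isSeparable K _
  haveI : Algebra.FormallyUnramified K (T ⧸ maximalIdeal T) := inferInstance
  obtain ⟨σ, hσ⟩ : ∃ σ : (T ⧸ maximalIdeal T) →ₐ[K] T,
      ∀ x : T ⧸ maximalIdeal T, Ideal.Quotient.mk (maximalIdeal T) (σ x) = x :=
    ⟨Algebra.FormallySmooth.lift (maximalIdeal T) hnil (AlgHom.id K _),
      fun x => Algebra.FormallySmooth.mk_lift (maximalIdeal T) hnil (AlgHom.id K _) x⟩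
  letI : Algebra (T ⧸ maximalIdeal T) T := σ.toAlgebra
  haveI : IsScalarTower K (T ⧸ maximalIdeal T) T :=
    IsScalarTower.of_algebraMap_eq fun x => (σ.commutes x).symm
  have hfull : ∀ t : T, ∃ l : T ⧸ maximalIdeal T,
      t - algebraMap (T ⧸ maximalIdeal T) T l ∈ maximalIdeal T := by
    intro t
    refine ⟨Ideal.Quotient.mk (maximalIdeal T) t, ?_⟩
    have halg : algebraMap (T ⧸ maximalIdeal T) T (Ideal.Quotient.mk (maximalIdeal T) t)
        = σ (Ideal.Quotient.mk (maximalIdeal T) t) := rfl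
    rw [← Ideal.Quotient.eq_zero_iff_mem, map_sub, halg, hσ, sub_self]
  exact aux_main K (T ⧸ maximalIdeal T) T a ha ν hν1 hνzero hνmin hfull
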